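/- (Stability of uniform exponential contraction.) Let R_j : B_j → B_{j+1} be linear operators such that ‖R_j^n‖ ≤ C₀·δ₀^n for all j and n, for some constants C₀, δ₀ > 0. Then for every δ₁ > δ₀ there exist constants ε₀ > 0 and C₁ > 0 with the following property: for any family of bounded linear operators S_j : B_j → B_{j+1} with sup_j ‖R_j − S_j‖ < ε₀, one has ‖S_j^n‖ ≤ C₁·δ₁^n for all j and n. -/

import Mathlib

universe u

/-- Iterated compositions `L_j^n = L_{j+n-1} ∘ ⋯ ∘ L_{j+1} ∘ L_j` of a sequence of
continuous linear operators between a sequence of Banach spaces. -/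
noncomputable def iterOp {B : ℕ → Type u} [∀ j, NormedAddCommGroup (B j)]
    [∀ j, NormedSpace ℝ (B j)] (L : ∀ j, B j →L[ℝ] B (j+1)) (j : ℕ) :
    (n : ℕ) → (B j →L[ℝ] B (j+n))
  | 0 => ContinuousLinearMap.id ℝ (B j)
  | n+1 => (L (j+n)).comp (iterOp L j n)

section Aux

variable {B : ℕ → Type u} [∀ j, NormedAddCommGroup (B j)] [∀ j, NormedSpace ℝ (B j)]

lemma iterOp_one (T : ∀ j, B j →L[ℝ] B (j+1)) (j : ℕ) : iterOp T j 1 = T j :=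
  ContinuousLinearMap.comp_id _

lemma iterOp_heq (T : ∀ j, B j →L[ℝ] B (j+1)) :
    ∀ m j k, HEq (iterOp T j (k + m)) ((iterOp T (j + k) m).comp (iterOp T j k)) := by
  intro m
  induction m with
  | zero =>
    intro j k
    exact heq_of_eq (ContinuousLinearMap.id_comp _).symm
  | succ m ih =>
    intro j k
    have key : ∀ (a b : ℕ) (h : a = b) (X : B j →L[ℝ] B a) (Y : B j →L[ℝ] B b),
        HEq X Y → HEq ((T a).comp X) ((T b).comp Y) := by
      rintro a b rfl X Y hXY
      rw [eq_of_heq hXY]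
    show HEq ((T (j + (k + m))).comp (iterOp T j (k + m)))
      ((iterOp T (j + k) (m + 1)).comp (iterOp T j k))
    have hr : (iterOp T (j + k) (m + 1)).comp (iterOp T j k)
        = (T (j + k + m)).comp ((iterOp T (j + k) m).comp (iterOp T j k)) := by
      rw [show iterOp T (j+k) (m+1) = (T (j+k+m)).comp (iterOp T (j+k) m) from rfl,
        ContinuousLinearMap.comp_assoc]
    rw [hr]
    exact key _ _ (Nat.add_assoc j k m).symm _ _ (ih j k)

lemma norm_heq {j a b : ℕ} (h : a = b) (f : B j →L[ℝ] B a) (g : B j →L[ℝ] B b)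
    (hfg : HEq f g) : ‖f‖ = ‖g‖ := by subst h; rw [eq_of_heq hfg]

lemma norm_iterOp_split (T : ∀ j, B j →L[ℝ] B (j+1)) (j k m : ℕ) :
    ‖iterOp T j (k + m)‖ ≤ ‖iterOp T (j + k) m‖ * ‖iterOp T j k‖ := by
  rw [norm_heq (Nat.add_assoc j k m).symm _ _ (iterOp_heq T m j k)]
  exact ContinuousLinearMap.opNorm_comp_le _ _

lemma norm_iterOp_le_pow (T : ∀ j, B j →L[ℝ] B (j+1)) (K : ℝ) (hK : 1 ≤ K)
    (hT : ∀ i, ‖T i‖ ≤ K) : ∀ n j, ‖iterOp T j n‖ ≤ K ^ n := by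
  intro n
  induction n with
  | zero =>
    intro j
    exact le_trans ContinuousLinearMap.norm_id_le (by simp)
  | succ n ih =>
    intro j
    calc ‖iterOp T j (n+1)‖ ≤ ‖T (j+n)‖ * ‖iterOp T j n‖ :=
          ContinuousLinearMap.opNorm_comp_le _ _
      _ ≤ K * K ^ n := mul_le_mul (hT _) (ih j) (norm_nonneg _)
          (le_trans zero_le_one hK)
      _ = K ^ (n+1) := by ring

lemma iterOp_sub (R T : ∀ j, B j →L[ℝ] B (j+1)) (j n : ℕ) :
    iterOp R j (n+1) - iterOp T j (n+1)
      = (R (j+n) - T (j+n)).comp (iterOp R j n)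
        + (T (j+n)).comp (iterOp R j n - iterOp T j n) := by
  show (R (j+n)).comp (iterOp R j n) - (T (j+n)).comp (iterOp T j n) = _
  rw [ContinuousLinearMap.sub_comp, ContinuousLinearMap.comp_sub]
  abel

lemma diff_le (R T : ∀ j, B j →L[ℝ] B (j+1)) (C₀ δ₀ ε K : ℝ)
    (hC₀ : 0 ≤ C₀) (hδ₀ : 0 ≤ δ₀) (hε : 0 ≤ ε) (hK1 : 1 ≤ K) (hδK : δ₀ ≤ K)
    (hR : ∀ j n, ‖iterOp R j n‖ ≤ C₀ * δ₀ ^ n)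
    (hT : ∀ i, ‖T i‖ ≤ K) (hRT : ∀ i, ‖R i - T i‖ ≤ ε) :
    ∀ n j, ‖iterOp R j n - iterOp T j n‖ ≤ n * ε * (C₀ + 1) * K ^ n := by
  intro n
  induction n with
  | zero =>
    intro j
    simp [iterOp]
  | succ n ih =>
    intro j
    have hKn : (0:ℝ) ≤ K ^ n := pow_nonneg (le_trans zero_le_one hK1) n
    have hδn : δ₀ ^ n ≤ K ^ n := pow_le_pow_left₀ hδ₀ hδK n
    have h1 : ‖(R (j+n) - T (j+n)).comp (iterOp R j n)‖ ≤ ε * (C₀ * δ₀ ^ n) := by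
      calc ‖(R (j+n) - T (j+n)).comp (iterOp R j n)‖
          ≤ ‖R (j+n) - T (j+n)‖ * ‖iterOp R j n‖ :=
            ContinuousLinearMap.opNorm_comp_le _ _
        _ ≤ ε * (C₀ * δ₀ ^ n) := mul_le_mul (hRT _) (hR j n) (norm_nonneg _) hε
    have h2 : ‖(T (j+n)).comp (iterOp R j n - iterOp T j n)‖
        ≤ K * (n * ε * (C₀ + 1) * K ^ n) := by
      calc ‖(T (j+n)).comp (iterOp R j n - iterOp T j n)‖
          ≤ ‖T (j+n)‖ * ‖iterOp R j n - iterOp T j n‖ :=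
            ContinuousLinearMap.opNorm_comp_le _ _
        _ ≤ K * (n * ε * (C₀ + 1) * K ^ n) := mul_le_mul (hT _) (ih j)
            (norm_nonneg _) (le_trans zero_le_one hK1)
    calc ‖iterOp R j (n+1) - iterOp T j (n+1)‖
        ≤ ‖(R (j+n) - T (j+n)).comp (iterOp R j n)‖
          + ‖(T (j+n)).comp (iterOp R j n - iterOp T j n)‖ := by
            rw [iterOp_sub]; exact norm_add_le _ _
      _ ≤ ε * (C₀ * δ₀ ^ n) + K * (n * ε * (C₀ + 1) * K ^ n) := add_le_add h1 h2
      _ ≤ (n+1 : ℕ) * ε * (C₀ + 1) * K ^ (n+1) := by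
          push_cast
          have hδnK : ε * (C₀ * δ₀ ^ n) ≤ ε * (C₀ + 1) * K ^ (n+1) := by
            have : δ₀ ^ n ≤ K ^ (n+1) := le_trans hδn (by
              calc K ^ n = 1 * K ^ n := (one_mul _).symm
                _ ≤ K * K ^ n := by
                    apply mul_le_mul_of_nonneg_right hK1 hKn
                _ = K ^ (n+1) := by ring)
            have hc : C₀ * δ₀ ^ n ≤ (C₀ + 1) * K ^ (n+1) := by
              nlinarith [pow_nonneg (le_trans zero_le_one hK1) (n+1), pow_nonneg hδ₀ n]
            rw [mul_assoc]
            exact mul_le_mul_of_nonneg_left hc hε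
          have h2' : K * (n * ε * (C₀ + 1) * K ^ n) = n * ε * (C₀ + 1) * K ^ (n+1) := by
            ring
          nlinarith [hδnK]

end Aux

/-- **Stability of uniform exponential contraction.**  If the iterates of `R_j` satisfy
`‖R_j^n‖ ≤ C₀·δ₀^n`, then for every `δ₁ > δ₀` there are `ε₀, C₁ > 0` such that any family
`S_j` with `sup_j ‖R_j − S_j‖ < ε₀` satisfies `‖S_j^n‖ ≤ C₁·δ₁^n` for all `j, n`. -/
theorem stability_of_exponential_contraction
    (B : ℕ → Type u) [∀ j, NormedAddCommGroup (B j)] [∀ j, NormedSpace ℝ (B j)]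
    (R : ∀ j, B j →L[ℝ] B (j+1)) (C₀ δ₀ : ℝ) (hC₀ : 0 < C₀) (hδ₀ : 0 < δ₀)
    (hR : ∀ j n, ‖iterOp R j n‖ ≤ C₀ * δ₀ ^ n) :
    ∀ δ₁ : ℝ, δ₀ < δ₁ → ∃ ε₀ C₁ : ℝ, 0 < ε₀ ∧ 0 < C₁ ∧
      ∀ T : ∀ j, B j →L[ℝ] B (j+1),
        (∀ j, ‖R j - T j‖ < ε₀) → ∀ j n, ‖iterOp T j n‖ ≤ C₁ * δ₁ ^ n := by
  intro δ₁ hδ₁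
  have hδ₁0 : 0 < δ₁ := hδ₀.trans hδ₁
  set K : ℝ := C₀ * δ₀ + δ₀ + 2 with hKdef
  have hK1 : (1:ℝ) ≤ K := by nlinarith
  have hK0 : (0:ℝ) < K := by linarith
  have hδK : δ₀ ≤ K := by nlinarith
  -- choose N with C₀ * δ₀^N < δ₁^N / 2
  obtain ⟨N₀, hN₀⟩ : ∃ n : ℕ, (δ₀/δ₁)^n < 1/(2*C₀) :=
    exists_pow_lt_of_lt_one (by positivity) (by rw [div_lt_one hδ₁0]; exact hδ₁)
  set N : ℕ := max N₀ 1 with hNdef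
  have hN1 : 1 ≤ N := le_max_right _ _
  have hratio : (δ₀/δ₁)^N ≤ (δ₀/δ₁)^N₀ :=
    pow_le_pow_of_le_one (by positivity) (by
      rw [div_le_one hδ₁0]; exact hδ₁.le) (le_max_left _ _)
  have hδ₁N : (0:ℝ) < δ₁ ^ N := pow_pos hδ₁0 N
  have hδ₀N : (0:ℝ) < δ₀ ^ N := pow_pos hδ₀ N
  have hNbound : C₀ * δ₀ ^ N < δ₁ ^ N / 2 := by
    have h := lt_of_le_of_lt hratio hN₀
    rw [div_pow, div_lt_div_iff₀ hδ₁N (by positivity)] at h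
    nlinarith
  -- choose ε₀
  have hden : (0:ℝ) < 2 * (N * (C₀ + 1) * K ^ N) := by positivity
  set ε₀ : ℝ := min 1 (δ₁ ^ N / (2 * (N * (C₀ + 1) * K ^ N))) with hε₀def
  have hε₀pos : 0 < ε₀ := lt_min one_pos (by positivity)
  have hε₀1 : ε₀ ≤ 1 := min_le_left _ _
  set C₁ : ℝ := (K/δ₁ + 1) ^ N with hC₁def
  have hC₁pos : 0 < C₁ := by positivity
  refine ⟨ε₀, C₁, hε₀pos, hC₁pos, ?_⟩
  intro T hT
  have hRnorm : ∀ i, ‖R i‖ ≤ C₀ * δ₀ := by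
    intro i
    have := hR i 1
    rwa [iterOp_one, pow_one] at this
  have hTK : ∀ i, ‖T i‖ ≤ K := by
    intro i
    have h1 : ‖T i‖ ≤ ‖R i‖ + ‖R i - T i‖ := by
      have := norm_sub_le (R i) (R i - T i)
      simpa using this
    have := (hT i).le
    have := hRnorm i
    linarith [hε₀1]
  have hRT : ∀ i, ‖R i - T i‖ ≤ ε₀ := fun i => (hT i).le
  have hblock : ∀ j, ‖iterOp T j N‖ ≤ δ₁ ^ N := by
    intro j
    have hdiff := diff_le R T C₀ δ₀ ε₀ K hC₀.le hδ₀.le hε₀pos.le hK1 hδK hR hTK hRT N j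
    have hεN : (N:ℝ) * ε₀ * (C₀ + 1) * K ^ N ≤ δ₁ ^ N / 2 := by
      have h1 : ε₀ ≤ δ₁ ^ N / (2 * (N * (C₀ + 1) * K ^ N)) := min_le_right _ _
      have hNpos : (0:ℝ) < (N:ℝ) := by exact_mod_cast hN1
      have hKN : (0:ℝ) < K ^ N := pow_pos hK0 N
      rw [le_div_iff₀ hden] at h1
      nlinarith
    have htri : ‖iterOp T j N‖ ≤ ‖iterOp R j N‖ + ‖iterOp R j N - iterOp T j N‖ := by
      have := norm_sub_le (iterOp R j N) (iterOp R j N - iterOp T j N)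
      simpa using this
    have := hR j N
    linarith
  -- strong induction
  intro j n
  revert j
  induction n using Nat.strong_induction_on with
  | _ n ih =>
    intro j
    rcases lt_or_ge n N with h | h
    · have hKn := norm_iterOp_le_pow T K hK1 hTK n j
      have hC₁n : K ^ n ≤ C₁ * δ₁ ^ n := by
        have h1 : (K/δ₁) ^ n ≤ (K/δ₁ + 1) ^ n := by
          apply pow_le_pow_left₀ (by positivity)
          linarith
        have h2 : (K/δ₁ + 1) ^ n ≤ (K/δ₁ + 1) ^ N := by
          apply pow_le_pow_right₀ (by
            have : (0:ℝ) ≤ K/δ₁ := by positivity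
            linarith) h.le
        have h3 : K ^ n = (K/δ₁) ^ n * δ₁ ^ n := by
          rw [div_pow, div_mul_cancel₀]
          positivity
        rw [h3, hC₁def]
        have hδn : (0:ℝ) < δ₁ ^ n := pow_pos hδ₁0 n
        nlinarith
      linarith
    · obtain ⟨m, rfl⟩ : ∃ m, n = N + m := ⟨n - N, by omega⟩
      have hm : m < N + m := by omega
      calc ‖iterOp T j (N + m)‖ ≤ ‖iterOp T (j + N) m‖ * ‖iterOp T j N‖ :=
            norm_iterOp_split T j N m
        _ ≤ (C₁ * δ₁ ^ m) * δ₁ ^ N :=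
            mul_le_mul (ih m hm (j + N)) (hblock j) (norm_nonneg _)
              (by positivity)
        _ = C₁ * δ₁ ^ (N + m) := by rw [pow_add]; ring
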